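/- For all real a > 0 and x1 > 0, lim_{ε→0⁺} ∫_{{ξ < 0 : |ξ + a| > ε}} √(−a/ξ) / ( (x1 − ξ)(ξ + a) ) dξ = π √(a/x1) / (x1 + a), where for ξ < 0 the quantity −a/ξ is positive so the square root is real, the integrand is integrable near ξ = 0⁻ and at −∞, and the limit is the Cauchy principal value with respect to the simple pole at ξ = −a. -/

import Mathlib

open MeasureTheory Filter Real Set Topology

noncomputable def phi13 (a x1 u : ℝ) : ℝ :=
  -(2 * Real.sqrt a / ((x1 + a) * Real.sqrt x1) * Real.arctan (u / Real.sqrt x1))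
  - 1 / (x1 + a) * (Real.log (Real.sqrt a + u) - Real.log (Real.sqrt a - u))

noncomputable def F13 (a x1 ξ : ℝ) : ℝ := phi13 a x1 (Real.sqrt (-ξ))

lemma sqrt_neg_div13 {a ξ : ℝ} (ha : 0 ≤ a) :
    Real.sqrt (-a / ξ) = Real.sqrt a / Real.sqrt (-ξ) := by
  rw [show -a / ξ = a / (-ξ) by rw [div_neg, neg_div], Real.sqrt_div ha]

lemma hasDerivAt_F13 {a x1 ξ : ℝ} (ha : 0 < a) (hx1 : 0 < x1) (hξ : ξ < 0) (hne : ξ ≠ -a) :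
    HasDerivAt (F13 a x1) (Real.sqrt (-a / ξ) / ((x1 - ξ) * (ξ + a))) ξ := by
  have ht0 : (0:ℝ) < -ξ := by linarith
  have hsq : HasDerivAt (fun y : ℝ => Real.sqrt (-y)) (1 / (2 * Real.sqrt (-ξ)) * (-1)) ξ :=
    (Real.hasDerivAt_sqrt (ne_of_gt ht0)).comp ξ (hasDerivAt_neg ξ)
  set t := Real.sqrt (-ξ) with htdef
  set s := Real.sqrt a with hsdef
  set c := Real.sqrt x1 with hcdef
  have htpos : 0 < t := Real.sqrt_pos.2 ht0
  have hspos : 0 < s := Real.sqrt_pos.2 ha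
  have hcpos : 0 < c := Real.sqrt_pos.2 hx1
  have ht2 : t ^ 2 = -ξ := Real.sq_sqrt ht0.le
  have hs2 : s ^ 2 = a := Real.sq_sqrt ha.le
  have hc2 : c ^ 2 = x1 := Real.sq_sqrt hx1.le
  have hst : s ≠ t := by
    intro h
    apply hne
    nlinarith [ht2, hs2]
  have hst0 : s - t ≠ 0 := sub_ne_zero.2 hst
  have hst1 : s + t ≠ 0 := by positivity
  have A1 : HasDerivAt (fun y : ℝ => Real.arctan (Real.sqrt (-y) / c))
      (1 / (1 + (t / c) ^ 2) * (1 / (2 * t) * (-1) / c)) ξ :=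
    by have := (Real.hasDerivAt_arctan (t / c)).comp ξ (hsq.div_const c); exact this
  have L1 : HasDerivAt (fun y : ℝ => Real.log (s + Real.sqrt (-y)))
      ((s + t)⁻¹ * (0 + 1 / (2 * t) * (-1))) ξ :=
    by have := (Real.hasDerivAt_log hst1).comp ξ ((hasDerivAt_const ξ s).add hsq); exact this
  have L2 : HasDerivAt (fun y : ℝ => Real.log (s - Real.sqrt (-y)))
      ((s - t)⁻¹ * (0 - 1 / (2 * t) * (-1))) ξ :=
    by have := (Real.hasDerivAt_log hst0).comp ξ ((hasDerivAt_const ξ s).sub hsq); exact this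
  have H := ((A1.const_mul (2 * s / ((x1 + a) * c))).neg).sub
      ((L1.sub L2).const_mul (1 / (x1 + a)))
  have hF : F13 a x1 = fun y => -(2 * s / ((x1 + a) * c) * Real.arctan (Real.sqrt (-y) / c))
      - 1 / (x1 + a) * (Real.log (s + Real.sqrt (-y)) - Real.log (s - Real.sqrt (-y))) := rfl
  rw [hF]
  refine H.congr_deriv ?_
  symm
  have hsa : Real.sqrt (-a / ξ) = s / t := sqrt_neg_div13 ha.le
  rw [hsa]
  have hξe : ξ = -t ^ 2 := by linarith
  have h1 : (1 : ℝ) + (t / c) ^ 2 ≠ 0 := by positivity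
  have h2 : x1 + a ≠ 0 := ne_of_gt (by linarith)
  rw [hξe, ← hs2, ← hc2]
  have h3 : c ^ 2 - -t ^ 2 ≠ 0 := ne_of_gt (by nlinarith)
  have h4 : -t ^ 2 + s ^ 2 ≠ 0 := by
    intro h
    have hprod : (s - t) * (s + t) = 0 := by nlinarith
    rcases mul_eq_zero.1 hprod with h' | h' <;> [exact hst0 h'; exact hst1 h']
  have ht0' : t ≠ 0 := ne_of_gt htpos
  have hc0' : c ≠ 0 := ne_of_gt hcpos
  field_simp
  ring


lemma tendsto_phi13_atTop {a x1 : ℝ} (ha : 0 < a) (hx1 : 0 < x1) :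
    Tendsto (phi13 a x1) atTop
      (𝓝 (-(2 * Real.sqrt a / ((x1 + a) * Real.sqrt x1) * (π / 2)))) := by
  unfold phi13
  set s := Real.sqrt a with hsdef
  have hs : 0 < s := Real.sqrt_pos.2 ha
  have h1 : Tendsto (fun u : ℝ => Real.arctan (u / Real.sqrt x1)) atTop (𝓝 (π / 2)) :=
    (Real.tendsto_arctan_atTop.mono_right nhdsWithin_le_nhds).comp
      (tendsto_id.atTop_div_const (Real.sqrt_pos.2 hx1))
  have hdiv : Tendsto (fun u : ℝ => s / u) atTop (𝓝 0) :=
    tendsto_const_nhds.div_atTop tendsto_id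
  have hr : Tendsto (fun u : ℝ => (s + u) / (s - u)) atTop (𝓝 (-1)) := by
    have h2 : Tendsto (fun u : ℝ => (s / u + 1) / (s / u - 1)) atTop (𝓝 (-1)) := by
      have h3 := (hdiv.add (tendsto_const_nhds (x := (1:ℝ)))).div
        (hdiv.sub (tendsto_const_nhds (x := (1:ℝ)))) (by norm_num)
      norm_num at h3
      exact h3
    apply h2.congr'
    filter_upwards [eventually_gt_atTop s] with u hu
    have hu0 : u ≠ 0 := ne_of_gt (lt_trans hs hu)
    have hsu : s - u ≠ 0 := ne_of_lt (by linarith)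
    field_simp
  have hlog : Tendsto (fun u : ℝ => Real.log (s + u) - Real.log (s - u)) atTop (𝓝 0) := by
    have hcont : ContinuousAt Real.log (-1) := Real.continuousAt_log (by norm_num)
    have h3 : Tendsto (fun u : ℝ => Real.log ((s + u) / (s - u))) atTop (𝓝 (Real.log (-1))) :=
      hcont.tendsto.comp hr
    rw [show Real.log (-1) = 0 by rw [show (-1:ℝ) = -(1:ℝ) by norm_num, Real.log_neg_eq_log,
      Real.log_one]] at h3
    apply h3.congr'
    filter_upwards [eventually_gt_atTop s] with u hu
    have h4 : s + u ≠ 0 := ne_of_gt (by linarith)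
    have h5 : s - u ≠ 0 := ne_of_lt (by linarith)
    rw [Real.log_div h4 h5]
  have hmain := ((h1.const_mul (2 * s / ((x1 + a) * Real.sqrt x1))).neg).sub
    (hlog.const_mul (1 / (x1 + a)))
  simpa using hmain

lemma tendsto_sqrt_neg_atBot13 : Tendsto (fun ξ : ℝ => Real.sqrt (-ξ)) atBot atTop := by
  have h1 : Tendsto Real.sqrt atTop atTop := by
    refine tendsto_atTop_atTop.2 fun b => ⟨b ^ 2, fun x hx => ?_⟩
    calc b ≤ |b| := le_abs_self b
      _ = Real.sqrt (b ^ 2) := (Real.sqrt_sq_eq_abs b).symm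
      _ ≤ Real.sqrt x := Real.sqrt_le_sqrt hx
  exact h1.comp tendsto_neg_atBot_atTop

lemma tendsto_F13_atBot {a x1 : ℝ} (ha : 0 < a) (hx1 : 0 < x1) :
    Tendsto (F13 a x1) atBot
      (𝓝 (-(2 * Real.sqrt a / ((x1 + a) * Real.sqrt x1) * (π / 2)))) :=
  (tendsto_phi13_atTop ha hx1).comp tendsto_sqrt_neg_atBot13

lemma continuousAt_F13 {a x1 ξ : ℝ} (ha : 0 < a)
    (h2 : Real.sqrt (-ξ) ≠ Real.sqrt a) : ContinuousAt (F13 a x1) ξ := by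
  have hsq : ContinuousAt (fun y : ℝ => Real.sqrt (-y)) ξ :=
    (Real.continuous_sqrt.comp continuous_neg).continuousAt
  have hs : 0 < Real.sqrt a := Real.sqrt_pos.2 ha
  have hne1 : Real.sqrt a + Real.sqrt (-ξ) ≠ 0 :=
    ne_of_gt (by have := Real.sqrt_nonneg (-ξ); linarith)
  have hne2 : Real.sqrt a - Real.sqrt (-ξ) ≠ 0 := sub_ne_zero.2 (Ne.symm h2)
  have c1 : ContinuousAt (fun y : ℝ => Real.arctan (Real.sqrt (-y) / Real.sqrt x1)) ξ :=
    Real.continuous_arctan.continuousAt.comp (hsq.div_const _)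
  have hadd : ContinuousAt (fun y : ℝ => Real.sqrt a + Real.sqrt (-y)) ξ :=
    continuousAt_const.add hsq
  have hsub : ContinuousAt (fun y : ℝ => Real.sqrt a - Real.sqrt (-y)) ξ :=
    continuousAt_const.sub hsq
  have c2 : ContinuousAt (fun y : ℝ => Real.log (Real.sqrt a + Real.sqrt (-y))) ξ :=
    ContinuousAt.comp (g := Real.log) (Real.continuousAt_log hne1) hadd
  have c3 : ContinuousAt (fun y : ℝ => Real.log (Real.sqrt a - Real.sqrt (-y))) ξ :=
    ContinuousAt.comp (g := Real.log) (Real.continuousAt_log hne2) hsub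
  exact ((c1.const_mul _).neg).sub ((c2.sub c3).const_mul _)

lemma F13_zero {a x1 : ℝ} : F13 a x1 0 = 0 := by
  simp [F13, phi13]


lemma integral13_eq {a x1 ε : ℝ} (ha : 0 < a) (hx1 : 0 < x1) (hε0 : 0 < ε) (hεa : ε < a) :
    ∫ ξ in {ξ : ℝ | ξ < 0 ∧ ε < |ξ + a|},
        Real.sqrt (-a / ξ) / ((x1 - ξ) * (ξ + a))
      = (F13 a x1 (-a - ε) - F13 a x1 (-a + ε))
        + 2 * Real.sqrt a / ((x1 + a) * Real.sqrt x1) * (π / 2) := by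
  set f : ℝ → ℝ := fun ξ => Real.sqrt (-a / ξ) / ((x1 - ξ) * (ξ + a)) with hfdef
  set m : ℝ := -(2 * Real.sqrt a / ((x1 + a) * Real.sqrt x1) * (π / 2)) with hmdef
  have hle : (-a + ε) ≤ 0 := by linarith
  have hcont_right : ContinuousOn (F13 a x1) (Icc (-a + ε) 0) := by
    intro ξ hξ
    refine (continuousAt_F13 ha ?_).continuousWithinAt
    have h1 : -ξ < a := by have := hξ.1; linarith
    exact ne_of_lt (Real.sqrt_lt_sqrt (by linarith [hξ.2]) h1)
  have hderiv_right : ∀ ξ ∈ Ioo (-a + ε) 0, HasDerivAt (F13 a x1) (f ξ) ξ := by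
    intro ξ hξ
    exact hasDerivAt_F13 ha hx1 hξ.2 (by intro h; rw [h] at hξ; have := hξ.1; linarith)
  have hpos : ∀ ξ ∈ Ioo (-a + ε) 0, 0 ≤ f ξ := by
    intro ξ hξ
    exact div_nonneg (Real.sqrt_nonneg _)
      (mul_nonneg (by have := hξ.2; linarith) (by have := hξ.1; linarith))
  have int_right : IntegrableOn f (Ioc (-a + ε) 0) :=
    intervalIntegral.integrableOn_deriv_of_nonneg hcont_right hderiv_right hpos
  have val_right : ∫ ξ in Ioc (-a + ε) 0, f ξ = F13 a x1 0 - F13 a x1 (-a + ε) := by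
    rw [← intervalIntegral.integral_of_le hle]
    exact intervalIntegral.integral_eq_sub_of_hasDeriv_right_of_le hle hcont_right
      (fun ξ hξ => (hderiv_right ξ hξ).hasDerivWithinAt)
      ((intervalIntegrable_iff_integrableOn_Ioc_of_le hle).2 int_right)
  have hder_g : ∀ x ∈ Ioi (a + ε), HasDerivAt (fun x : ℝ => F13 a x1 (-x)) (-(f (-x))) x := by
    intro x hx
    have hx' : a + ε < x := hx
    have h := (hasDerivAt_F13 (ξ := -x) ha hx1 (by linarith)
      (by intro h; have : x = a := neg_injective h; linarith)).comp x (hasDerivAt_neg x)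
    have hval : -(f (-x)) = f (-x) * (-1) := by ring
    rw [hval]
    exact h
  have hnonneg_g : ∀ x ∈ Ioi (a + ε), 0 ≤ -(f (-x)) := by
    intro x hx
    have hx' : a + ε < x := hx
    have h1 : f (-x) ≤ 0 := by
      have hd : (x1 - -x) * (-x + a) ≤ 0 :=
        mul_nonpos_iff.2 (Or.inl ⟨by linarith, by linarith⟩)
      exact div_nonpos_iff.2 (Or.inl ⟨Real.sqrt_nonneg _, hd⟩)
    linarith
  have hcont_g : ContinuousWithinAt (fun x : ℝ => F13 a x1 (-x)) (Ici (a + ε)) (a + ε) := by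
    have hc : ContinuousAt (F13 a x1) (-(a + ε)) := by
      apply continuousAt_F13 ha
      rw [neg_neg]
      exact (Real.sqrt_lt_sqrt ha.le (by linarith)).ne'
    exact (hc.comp continuous_neg.continuousAt).continuousWithinAt
  have htend_g : Tendsto (fun x : ℝ => F13 a x1 (-x)) atTop (𝓝 m) :=
    (tendsto_F13_atBot ha hx1).comp tendsto_neg_atTop_atBot
  have int_g : IntegrableOn (fun x => -(f (-x))) (Ioi (a + ε)) :=
    integrableOn_Ioi_deriv_of_nonneg hcont_g hder_g hnonneg_g htend_g
  have val_g : ∫ x in Ioi (a + ε), -(f (-x)) = m - F13 a x1 (-(a + ε)) :=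
    integral_Ioi_of_hasDerivAt_of_nonneg hcont_g hder_g hnonneg_g htend_g
  have val_left : ∫ ξ in Iio (-(a + ε)), f ξ = F13 a x1 (-(a + ε)) - m := by
    have h1 : ∫ x in Ioi (a + ε), f (-x) = F13 a x1 (-(a + ε)) - m := by
      have h2 := val_g
      rw [integral_neg] at h2
      linarith
    rw [← integral_Iic_eq_integral_Iio, ← integral_comp_neg_Ioi]
    exact h1
  have int_left : IntegrableOn f (Iio (-(a + ε))) := by
    have h2 : IntegrableOn (fun x => f (-x)) (Ioi (a + ε)) := by
      have h4 := int_g.neg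
      have h5 : (-fun x : ℝ => -f (-x)) = fun x : ℝ => f (-x) := by funext x; simp
      rwa [h5] at h4
    have h3 := (MeasurePreserving.integrableOn_comp_preimage
      (Measure.measurePreserving_neg (volume : Measure ℝ))
      (Homeomorph.neg ℝ).measurableEmbedding (f := f) (s := Iio (-(a + ε)))).1
    apply h3
    have hset : (Neg.neg ⁻¹' (Iio (-(a + ε))) : Set ℝ) = Ioi (a + ε) := by
      ext x
      simp only [mem_preimage, mem_Iio, mem_Ioi]
      constructor <;> intro h <;> linarith
    rw [hset]
    exact h2
  have hsetu : {ξ : ℝ | ξ < 0 ∧ ε < |ξ + a|} = Iio (-(a + ε)) ∪ Ioo (-a + ε) 0 := by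
    ext ξ
    simp only [mem_setOf_eq, mem_union, mem_Iio, mem_Ioo, lt_abs]
    constructor
    · rintro ⟨h0, h | h⟩
      · right; exact ⟨by linarith, h0⟩
      · left; linarith
    · rintro (h | ⟨h1, h2⟩)
      · exact ⟨by linarith, Or.inr (by linarith)⟩
      · exact ⟨h2, Or.inl (by linarith)⟩
  have hdisj : Disjoint (Iio (-(a + ε))) (Ioo (-a + ε) 0) := by
    rw [Set.disjoint_left]
    intro ξ h1 h2
    simp only [mem_Iio] at h1
    have := h2.1
    linarith
  rw [hsetu, setIntegral_union hdisj measurableSet_Ioo int_left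
    (int_right.mono_set Ioo_subset_Ioc_self)]
  rw [val_left, ← integral_Ioc_eq_integral_Ioo, val_right, F13_zero]
  have hq : -(a + ε) = -a - ε := by ring
  rw [hq, hmdef]
  ring


lemma F13_diff_eq {a x1 ε : ℝ} (ha : 0 < a) (hε0 : 0 < ε) (hεa : ε < a) :
    F13 a x1 (-a - ε) - F13 a x1 (-a + ε)
      = 2 * Real.sqrt a / ((x1 + a) * Real.sqrt x1) *
          (Real.arctan (Real.sqrt (a - ε) / Real.sqrt x1)
            - Real.arctan (Real.sqrt (a + ε) / Real.sqrt x1))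
        + 2 * (1 / (x1 + a)) *
          (Real.log (Real.sqrt a + Real.sqrt (a - ε))
            - Real.log (Real.sqrt a + Real.sqrt (a + ε))) := by
  have e1 : -(-a - ε) = a + ε := by ring
  have e2 : -(-a + ε) = a - ε := by ring
  unfold F13
  rw [e1, e2]
  unfold phi13
  set s := Real.sqrt a with hsdef
  set tp := Real.sqrt (a + ε) with htpdef
  set tm := Real.sqrt (a - ε) with htmdef
  have hs : 0 < s := Real.sqrt_pos.2 ha
  have hs2 : s ^ 2 = a := Real.sq_sqrt ha.le
  have hp2 : tp ^ 2 = a + ε := Real.sq_sqrt (by linarith)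
  have hm2 : tm ^ 2 = a - ε := Real.sq_sqrt (by linarith)
  have htm0 : 0 ≤ tm := Real.sqrt_nonneg _
  have h1 : s < tp := Real.sqrt_lt_sqrt ha.le (by linarith)
  have h2 : tm < s := Real.sqrt_lt_sqrt (by linarith) (by linarith)
  have hstp : s - tp ≠ 0 := ne_of_lt (by linarith)
  have hstp' : s + tp ≠ 0 := ne_of_gt (by linarith)
  have hstm : s - tm ≠ 0 := ne_of_gt (by linarith)
  have hstm' : s + tm ≠ 0 := ne_of_gt (by linarith)
  have ep : Real.log (s - tp) = Real.log ε - Real.log (s + tp) := by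
    have hmul : (s - tp) * (s + tp) = -ε := by nlinarith
    have hl := Real.log_mul hstp hstp'
    rw [hmul, Real.log_neg_eq_log] at hl
    linarith
  have em : Real.log (s - tm) = Real.log ε - Real.log (s + tm) := by
    have hmul : (s - tm) * (s + tm) = ε := by nlinarith
    have hl := Real.log_mul hstm hstm'
    rw [hmul] at hl
    linarith
  rw [ep, em]
  ring

theorem stmt13 (a x1 : ℝ) (ha : 0 < a) (hx1 : 0 < x1) :
    Tendsto (fun ε : ℝ =>
        ∫ ξ in {ξ : ℝ | ξ < 0 ∧ ε < |ξ + a|},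
          Real.sqrt (-a / ξ) / ((x1 - ξ) * (ξ + a)))
      (nhdsWithin 0 (Ioi 0))
      (nhds (Real.pi * Real.sqrt (a / x1) / (x1 + a))) := by
  have hsx : 0 < Real.sqrt x1 := Real.sqrt_pos.2 hx1
  have hsa : 0 < Real.sqrt a := Real.sqrt_pos.2 ha
  have hC : π * Real.sqrt (a / x1) / (x1 + a)
      = 0 + 2 * Real.sqrt a / ((x1 + a) * Real.sqrt x1) * (π / 2) := by
    rw [Real.sqrt_div ha.le]
    have h1 : Real.sqrt x1 ≠ 0 := ne_of_gt hsx
    have h2 : x1 + a ≠ 0 := ne_of_gt (by linarith)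
    field_simp
    ring
  rw [hC]
  have hmem : Ioo (0:ℝ) a ∈ 𝓝[>] (0:ℝ) := Ioo_mem_nhdsGT_of_mem ⟨le_refl 0, ha⟩
  have hsp : Tendsto (fun ε : ℝ => Real.sqrt (a + ε)) (𝓝[>] 0) (𝓝 (Real.sqrt a)) := by
    have hcont : Continuous fun ε : ℝ => Real.sqrt (a + ε) :=
      Real.continuous_sqrt.comp (continuous_const.add continuous_id)
    have h : Tendsto (fun ε : ℝ => Real.sqrt (a + ε)) (𝓝[>] (0:ℝ)) (𝓝 (Real.sqrt (a + 0))) :=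
      (hcont.tendsto 0).mono_left nhdsWithin_le_nhds
    simpa using h
  have hsm : Tendsto (fun ε : ℝ => Real.sqrt (a - ε)) (𝓝[>] 0) (𝓝 (Real.sqrt a)) := by
    have hcont : Continuous fun ε : ℝ => Real.sqrt (a - ε) :=
      Real.continuous_sqrt.comp (continuous_const.sub continuous_id)
    have h : Tendsto (fun ε : ℝ => Real.sqrt (a - ε)) (𝓝[>] (0:ℝ)) (𝓝 (Real.sqrt (a - 0))) :=
      (hcont.tendsto 0).mono_left nhdsWithin_le_nhds
    simpa using h
  have harc_p : Tendsto (fun ε : ℝ => Real.arctan (Real.sqrt (a + ε) / Real.sqrt x1))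
      (𝓝[>] 0) (𝓝 (Real.arctan (Real.sqrt a / Real.sqrt x1))) :=
    (Real.continuous_arctan.tendsto _).comp (hsp.div_const _)
  have harc_m : Tendsto (fun ε : ℝ => Real.arctan (Real.sqrt (a - ε) / Real.sqrt x1))
      (𝓝[>] 0) (𝓝 (Real.arctan (Real.sqrt a / Real.sqrt x1))) :=
    (Real.continuous_arctan.tendsto _).comp (hsm.div_const _)
  have hlogcont : ContinuousAt Real.log (Real.sqrt a + Real.sqrt a) :=
    Real.continuousAt_log (by positivity)
  have hlog_p : Tendsto (fun ε : ℝ => Real.log (Real.sqrt a + Real.sqrt (a + ε)))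
      (𝓝[>] 0) (𝓝 (Real.log (Real.sqrt a + Real.sqrt a))) :=
    hlogcont.tendsto.comp (tendsto_const_nhds.add hsp)
  have hlog_m : Tendsto (fun ε : ℝ => Real.log (Real.sqrt a + Real.sqrt (a - ε)))
      (𝓝[>] 0) (𝓝 (Real.log (Real.sqrt a + Real.sqrt a))) :=
    hlogcont.tendsto.comp (tendsto_const_nhds.add hsm)
  have hdiff : Tendsto (fun ε : ℝ => F13 a x1 (-a - ε) - F13 a x1 (-a + ε)) (𝓝[>] 0) (𝓝 0) := by
    have hT : Tendsto (fun ε : ℝ =>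
        2 * Real.sqrt a / ((x1 + a) * Real.sqrt x1) *
          (Real.arctan (Real.sqrt (a - ε) / Real.sqrt x1)
            - Real.arctan (Real.sqrt (a + ε) / Real.sqrt x1))
        + 2 * (1 / (x1 + a)) *
          (Real.log (Real.sqrt a + Real.sqrt (a - ε))
            - Real.log (Real.sqrt a + Real.sqrt (a + ε)))) (𝓝[>] 0) (𝓝 0) := by
      have h := (((harc_m.sub harc_p).const_mul
          (2 * Real.sqrt a / ((x1 + a) * Real.sqrt x1))).add
        ((hlog_m.sub hlog_p).const_mul (2 * (1 / (x1 + a)))))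
      simpa using h
    apply hT.congr'
    filter_upwards [hmem] with ε hε
    exact (F13_diff_eq ha hε.1 hε.2).symm
  have hfinal := hdiff.add (tendsto_const_nhds
    (x := 2 * Real.sqrt a / ((x1 + a) * Real.sqrt x1) * (π / 2)))
  apply hfinal.congr'
  filter_upwards [hmem] with ε hε
  exact (integral13_eq ha hx1 hε.1 hε.2).symm
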